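/- Let p ≥ 1, let a_1,…,a_p ∈ ℂ, and let A be the p×p companion matrix with first row (a_1,…,a_p), entries A_{r+1,r} = 1 for r = 1,…,p−1, and all other entries 0. Suppose λ_1,…,λ_p ∈ ℂ are pairwise distinct and satisfy λ^p − a_1 λ^{p−1} − ⋯ − a_p = ∏_{i=1}^p (λ − λ_i). Then for every ω ≥ 0, the (1,1) entry of A^ω equals the complete homogeneous symmetric polynomial of degree ω in the eigenvalues: (A^ω)_{1,1} = h_ω(λ_1,…,λ_p) = Σ_{i_1 + ⋯ + i_p = ω, i_j ≥ 0} λ_1^{i_1} ⋯ λ_p^{i_p}. -/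

import Mathlib

open Matrix BigOperators Finset

/-- The `p × p` companion matrix with first row `a` and ones on the subdiagonal. -/
def companion (p : ℕ) (a : Fin p → ℂ) : Matrix (Fin p) (Fin p) ℂ :=
  Matrix.of fun r c => if (r : ℕ) = 0 then a c else if (r : ℕ) = (c : ℕ) + 1 then 1 else 0

/-- Complete homogeneous symmetric function value. -/
noncomputable def hcf (p : ℕ) (lam : Fin p → ℂ) (n : ℕ) : ℂ :=
  ∑ d ∈ Finset.Nat.antidiagonalTuple p n, ∏ i : Fin p, lam i ^ d i

lemma hcf_zero (p : ℕ) (lam : Fin p → ℂ) : hcf p lam 0 = 1 := by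
  simp [hcf, Finset.Nat.antidiagonalTuple_zero_right]

lemma geom_inv (l : ℂ) :
    (1 - (PowerSeries.C l) * PowerSeries.X) * PowerSeries.mk (fun n => l ^ n) = 1 := by
  ext n
  rw [sub_mul, one_mul, map_sub, mul_assoc]
  cases n with
  | zero => simp
  | succ m => rw [PowerSeries.coeff_C_mul, PowerSeries.coeff_succ_X_mul]
              simp [pow_succ, mul_comm]

lemma coeff_prod_geom (p : ℕ) (lam : Fin p → ℂ) (n : ℕ) :
    PowerSeries.coeff n (∏ i : Fin p, PowerSeries.mk (fun m => lam i ^ m))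
      = hcf p lam n := by
  rw [PowerSeries.coeff_prod, hcf]
  refine Finset.sum_nbij' (fun f => (f : Fin p → ℕ))
    (fun g => Finsupp.equivFunOnFinite.symm g) ?_ ?_ ?_ ?_ ?_
  · intro f hf
    rw [Finset.mem_finsuppAntidiag] at hf
    simp [Finset.Nat.mem_antidiagonalTuple, ← hf.1]
  · intro g hg
    rw [Finset.Nat.mem_antidiagonalTuple] at hg
    simp [Finset.mem_finsuppAntidiag, ← hg]
  · intro f _; simp
  · intro g _; exact Finsupp.equivFunOnFinite.apply_symm_apply g
  · intro f _
    simp [PowerSeries.coeff_mk]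

open Polynomial in
lemma reflect_base (l : ℂ) : Polynomial.reflect 1 (X - C l) = 1 - C l * X := by
  rw [reflect_sub]
  have h1 : reflect 1 (X : ℂ[X]) = 1 := by
    have := Polynomial.reflect_monomial 1 1 (R := ℂ)
    simpa using this
  have h2 : reflect 1 (C l) = C l * X := by
    have := Polynomial.reflect_C_mul_X_pow 1 0 (c := l)
    simpa using this
  rw [h1, h2]

open Polynomial in
lemma reflect_prod {ι : Type*} [DecidableEq ι] (s : Finset ι) (l : ι → ℂ) :
    Polynomial.reflect s.card (∏ i ∈ s, (X - C (l i))) = ∏ i ∈ s, (1 - C (l i) * X) := by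
  induction s using Finset.induction_on with
  | empty => simp
  | insert a s ha ih =>
    rw [Finset.prod_insert ha, Finset.prod_insert ha, Finset.card_insert_of_notMem ha,
      add_comm, Polynomial.reflect_mul (X - C (l a)) _ (natDegree_X_sub_C _).le
        (le_trans (Polynomial.natDegree_prod_le _ _) ?_), reflect_base, ih]
    calc ∑ i ∈ s, (X - C (l i)).natDegree ≤ ∑ i ∈ s, 1 := by
          apply Finset.sum_le_sum; intro i _; exact (natDegree_X_sub_C _).le
      _ = s.card := by simp

open Polynomial in
lemma hcf_rec (p : ℕ) (hp : 0 < p) (a : Fin p → ℂ) (lam : Fin p → ℂ)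
    (hroots : ∀ z : ℂ, z ^ p - ∑ k : Fin p, a k * z ^ (p - 1 - (k : ℕ))
      = ∏ i : Fin p, (z - lam i)) (n : ℕ) :
    hcf p lam (n + 1) = ∑ k : Fin p, a k * (if (k : ℕ) ≤ n then hcf p lam (n - k) else 0) := by
  set Pp : ℂ[X] := X ^ p - ∑ k : Fin p, C (a k) * X ^ (p - 1 - (k : ℕ)) with hPp
  have hPprod : Pp = ∏ i : Fin p, (X - C (lam i)) := by
    apply Polynomial.funext
    intro z
    simpa [Pp, eval_prod, eval_finset_sum] using hroots z
  -- coefficients of Pp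
  have hPcoeff_p : Pp.coeff p = 1 := by
    have hz : ∑ k : Fin p, (C (a k) * X ^ (p - 1 - (k : ℕ))).coeff p = 0 := by
      apply Finset.sum_eq_zero
      intro k _
      have hk := k.isLt
      have : p ≠ p - 1 - (k : ℕ) := by omega
      simp [coeff_C_mul, coeff_X_pow, this]
    rw [hPp, coeff_sub, finset_sum_coeff, hz, sub_zero, coeff_X_pow, if_pos rfl]
  have hPcoeff_k : ∀ i : ℕ, ∀ h : i < p, Pp.coeff (p - 1 - i) = -(a ⟨i, h⟩) := by
    intro i hip
    have hne : ¬ (p - 1 - i = p) := by omega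
    have hs : ∑ k : Fin p, (C (a k) * X ^ (p - 1 - (k : ℕ))).coeff (p - 1 - i)
        = a ⟨i, hip⟩ := by
      rw [Finset.sum_eq_single (⟨i, hip⟩ : Fin p)]
      · simp
      · intro b _ hb
        have hbi : (b : ℕ) ≠ i := fun h => hb (Fin.ext h)
        have hlt := b.isLt
        have hne2 : p - 1 - i ≠ p - 1 - (b : ℕ) := by omega
        simp [coeff_C_mul, coeff_X_pow, hne2]
      · simp
    rw [hPp, coeff_sub, finset_sum_coeff, hs, coeff_X_pow, if_neg hne, zero_sub]
  have hPdeg : Pp.natDegree ≤ p := by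
    rw [hPprod]
    refine le_trans (Polynomial.natDegree_prod_le _ _) ?_
    calc ∑ i : Fin p, (X - C (lam i)).natDegree ≤ ∑ _i : Fin p, 1 := by
          apply Finset.sum_le_sum; intro i _; exact (natDegree_X_sub_C _).le
      _ = p := by simp
  -- Q = reflect p Pp = ∏ (1 - C λ X)
  set Q : ℂ[X] := ∏ i : Fin p, (1 - C (lam i) * X) with hQ
  have hQreflect : Q = Polynomial.reflect p Pp := by
    rw [hQ, hPprod]
    have := reflect_prod (Finset.univ : Finset (Fin p)) lam
    simpa using this.symm
  have hQ0 : Q.coeff 0 = 1 := by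
    rw [hQreflect, coeff_reflect, revAt_le (Nat.zero_le p), Nat.sub_zero, hPcoeff_p]
  have hQsucc : ∀ i : ℕ, ∀ h : i < p, Q.coeff (i + 1) = -(a ⟨i, h⟩) := by
    intro i hip
    rw [hQreflect, coeff_reflect, revAt_le (by omega : i + 1 ≤ p)]
    have : p - (i + 1) = p - 1 - i := by omega
    rw [this, hPcoeff_k i hip]
  have hQhigh : ∀ i : ℕ, p ≤ i → Q.coeff (i + 1) = 0 := by
    intro i hpi
    rw [hQreflect, coeff_reflect, revAt_eq_self_of_lt (by omega : p < i + 1)]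
    exact Polynomial.coeff_eq_zero_of_natDegree_lt (lt_of_le_of_lt hPdeg (by omega))
  -- power series identity
  have hps : (↑Q : PowerSeries ℂ) * (∏ i : Fin p, PowerSeries.mk (fun m => lam i ^ m)) = 1 := by
    have hcast : (↑Q : PowerSeries ℂ)
        = ∏ i : Fin p, (1 - (PowerSeries.C (lam i)) * PowerSeries.X) := by
      rw [hQ, ← Polynomial.coeToPowerSeries.ringHom_apply, map_prod]
      apply Finset.prod_congr rfl
      intro i _
      simp only [Polynomial.coeToPowerSeries.ringHom_apply, Polynomial.coe_sub,
        Polynomial.coe_one, Polynomial.coe_mul, Polynomial.coe_C, Polynomial.coe_X]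
    rw [hcast, ← Finset.prod_mul_distrib]
    rw [Finset.prod_eq_one]
    intro i _
    exact geom_inv (lam i)
  -- take coefficient n+1
  have hcoeff := congrArg (PowerSeries.coeff (n + 1)) hps
  rw [PowerSeries.coeff_mul, PowerSeries.coeff_one, if_neg (Nat.succ_ne_zero n)] at hcoeff
  rw [Finset.Nat.sum_antidiagonal_eq_sum_range_succ_mk] at hcoeff
  simp only [Polynomial.coeff_coe, coeff_prod_geom] at hcoeff
  rw [Finset.sum_range_succ'] at hcoeff
  simp only [Nat.sub_zero] at hcoeff
  -- hcoeff : ∑ i ∈ range (n+1), Q.coeff (i+1) * hcf p lam (n+1-(i+1)) + Q.coeff 0 * hcf p lam (n+1) = 0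
  have key : hcf p lam (n + 1)
      = ∑ i ∈ Finset.range (n + 1), (-(Q.coeff (i + 1))) * hcf p lam (n - i) := by
    have : ∀ i ∈ Finset.range (n + 1), Q.coeff (i+1) * hcf p lam (n + 1 - (i + 1))
        = Q.coeff (i+1) * hcf p lam (n - i) := by
      intro i _
      congr 2
      omega
    rw [Finset.sum_congr rfl this] at hcoeff
    rw [hQ0, one_mul] at hcoeff
    have hneg : (∑ i ∈ Finset.range (n + 1), (-(Q.coeff (i + 1))) * hcf p lam (n - i))
        = -(∑ i ∈ Finset.range (n + 1), Q.coeff (i + 1) * hcf p lam (n - i)) := by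
      rw [← Finset.sum_neg_distrib]
      apply Finset.sum_congr rfl
      intros
      ring
    rw [hneg]
    linear_combination hcoeff
  -- convert to Fin p sum
  set g : ℕ → ℂ := fun i => (-(Q.coeff (i + 1))) * (if i ≤ n then hcf p lam (n - i) else 0)
    with hg
  set N := max (n + 1) p with hN
  have hL : hcf p lam (n + 1) = ∑ i ∈ Finset.range N, g i := by
    rw [key]
    have e1 : ∑ i ∈ Finset.range (n + 1), (-(Q.coeff (i + 1))) * hcf p lam (n - i)
        = ∑ i ∈ Finset.range (n + 1), g i := by
      apply Finset.sum_congr rfl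
      intro i hi
      simp only [Finset.mem_range] at hi
      show _ = -Q.coeff (i + 1) * (if i ≤ n then hcf p lam (n - i) else 0)
      rw [if_pos (by omega : i ≤ n)]
    rw [e1]
    refine Finset.sum_subset (Finset.range_subset_range.mpr (le_max_left _ _)) ?_
    intro i _ hi
    have hni : ¬ i ≤ n := by simp only [Finset.mem_range] at hi; omega
    simp [hg, hni]
  have hR : ∑ k : Fin p, a k * (if (k : ℕ) ≤ n then hcf p lam (n - k) else 0)
      = ∑ i ∈ Finset.range N, g i := by
    have h1 : ∀ k : Fin p, a k * (if (k : ℕ) ≤ n then hcf p lam (n - (k : ℕ)) else 0)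
        = g (k : ℕ) := by
      intro k
      show a k * (if (k : ℕ) ≤ n then hcf p lam (n - (k : ℕ)) else 0)
        = -Q.coeff ((k : ℕ) + 1) * (if (k : ℕ) ≤ n then hcf p lam (n - (k : ℕ)) else 0)
      rw [hQsucc (k : ℕ) k.isLt, neg_neg, Fin.eta]
    rw [Finset.sum_congr rfl (fun k _ => h1 k), Fin.sum_univ_eq_sum_range g p]
    refine Finset.sum_subset (Finset.range_subset_range.mpr (le_max_right _ _)) ?_
    intro i _ hi
    have hpi : p ≤ i := by simp only [Finset.mem_range] at hi; omega
    simp [hg, hQhigh i hpi]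
  rw [hL, hR]

lemma companion_pow_entry (p : ℕ) (hp : 0 < p) (a : Fin p → ℂ) (lam : Fin p → ℂ)
    (hroots : ∀ z : ℂ, z ^ p - ∑ k : Fin p, a k * z ^ (p - 1 - (k : ℕ))
      = ∏ i : Fin p, (z - lam i)) :
    ∀ ω : ℕ, ∀ r : Fin p, ((companion p a) ^ ω) r ⟨0, hp⟩
      = if (r : ℕ) ≤ ω then hcf p lam (ω - (r : ℕ)) else 0 := by
  intro ω
  induction ω with
  | zero =>
    intro r
    rw [pow_zero]
    rcases Nat.eq_zero_or_pos (r : ℕ) with h0 | h0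
    · have : r = ⟨0, hp⟩ := Fin.ext h0
      subst this
      simp [Matrix.one_apply, hcf_zero]
    · have hne : r ≠ ⟨0, hp⟩ := by
        intro h; rw [h] at h0; simp at h0
      simp [Matrix.one_apply_ne hne, Nat.not_le.mpr h0, h0]
  | succ m ih =>
    intro r
    rw [pow_succ', Matrix.mul_apply]
    rcases Nat.eq_zero_or_pos (r : ℕ) with h0 | h0
    · -- first row
      have hA : ∀ c : Fin p, companion p a r c = a c := by
        intro c; simp [companion, h0]
      rw [Finset.sum_congr rfl (fun c _ => by rw [hA c, ih c])]
      rw [if_pos (by omega : (r : ℕ) ≤ m + 1), h0, Nat.sub_zero]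
      exact (hcf_rec p hp a lam hroots m).symm
    · -- subdiagonal row
      obtain ⟨r', hr'⟩ : ∃ r' : Fin p, (r' : ℕ) + 1 = (r : ℕ) := by
        refine ⟨⟨(r : ℕ) - 1, by omega⟩, by simp; omega⟩
      have hA : ∀ c : Fin p, companion p a r c = if c = r' then 1 else 0 := by
        intro c
        simp only [companion, Matrix.of_apply]
        rw [if_neg (by omega : ¬ (r : ℕ) = 0)]
        by_cases hc : c = r'
        · subst hc; rw [if_pos (by omega), if_pos rfl]
        · rw [if_neg, if_neg hc]
          intro h
          exact hc (Fin.ext (by omega))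
      rw [Finset.sum_congr rfl (fun c _ => by rw [hA c, ite_mul, one_mul, zero_mul])]
      rw [Finset.sum_ite_eq' Finset.univ r' (fun c => ((companion p a) ^ m) c ⟨0, hp⟩)]
      rw [if_pos (Finset.mem_univ r'), ih r']
      by_cases hle : (r : ℕ) ≤ m + 1
      · rw [if_pos hle, if_pos (by omega : (r' : ℕ) ≤ m)]
        congr 1
        omega
      · rw [if_neg hle, if_neg (by omega : ¬ (r' : ℕ) ≤ m)]

theorem stmt9 (p : ℕ) (hp : 0 < p) (a : Fin p → ℂ) (lam : Fin p → ℂ)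
    (hdist : Function.Injective lam)
    (hroots : ∀ z : ℂ, z ^ p - ∑ k : Fin p, a k * z ^ (p - 1 - (k : ℕ))
      = ∏ i : Fin p, (z - lam i))
    (ω : ℕ) :
    ((companion p a) ^ ω) ⟨0, hp⟩ ⟨0, hp⟩
      = ∑ d ∈ Finset.Nat.antidiagonalTuple p ω, ∏ i : Fin p, lam i ^ d i := by
  have := companion_pow_entry p hp a lam hroots ω ⟨0, hp⟩
  simpa [hcf] using this
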